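/- Let W be a finite subset of [0,1] with |W| > 3, let f : W → ℝ be a nonnegative function, and let C₁ ≥ 0 be a constant such that for every subset Z ⊆ W one has ∑_{θ ∈ Z} f(θ) ≤ C₁ · |Z|^{1/2}. Then ∑_{θ ∈ W} f(θ)² ≤ 2 · C₁² · log |W|. -/

import Mathlib

lemma aux_harmonic_bound (f : ℝ → ℝ) (C₁ : ℝ) (hC₁ : 0 ≤ C₁) :
    ∀ (W : Finset ℝ), (∀ θ ∈ W, 0 ≤ f θ) →
    (∀ Z ⊆ W, ∑ θ ∈ Z, f θ ≤ C₁ * Real.sqrt Z.card) →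
    ∑ θ ∈ W, (f θ) ^ 2 ≤ C₁ ^ 2 * (harmonic W.card : ℝ) := by
  intro W
  induction W using Finset.strongInduction with
  | _ W ih =>
    intro hf hbound
    rcases W.eq_empty_or_nonempty with rfl | hne
    · simp
    obtain ⟨θ₀, hθ₀W, hmin⟩ := W.exists_min_image f hne
    obtain ⟨m, hm⟩ : ∃ m, W.card = m + 1 :=
      ⟨W.card - 1, (Nat.succ_pred_eq_of_pos (Finset.card_pos.mpr hne)).symm⟩
    have hnpos : (0 : ℝ) < W.card := by positivity
    have h1 : (W.card : ℝ) * f θ₀ ≤ ∑ θ ∈ W, f θ := by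
      have := Finset.card_nsmul_le_sum W f (f θ₀) (fun x hx => hmin x hx)
      simpa [nsmul_eq_mul] using this
    have h2 : ∑ θ ∈ W, f θ ≤ C₁ * Real.sqrt W.card := hbound W le_rfl
    have hsq : f θ₀ ^ 2 ≤ C₁ ^ 2 / W.card := by
      have hfθ₀ : 0 ≤ f θ₀ := hf θ₀ hθ₀W
      have hle : f θ₀ ≤ C₁ / Real.sqrt W.card := by
        rw [le_div_iff₀ (Real.sqrt_pos.mpr hnpos)]
        calc f θ₀ * Real.sqrt W.card
            ≤ f θ₀ * Real.sqrt W.card * (Real.sqrt W.card * Real.sqrt W.card) / W.card := by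
              rw [Real.mul_self_sqrt hnpos.le]; field_simp; exact le_rfl
          _ = (W.card : ℝ) * f θ₀ * Real.sqrt W.card / W.card := by
              rw [Real.mul_self_sqrt hnpos.le]; ring
          _ ≤ C₁ * Real.sqrt W.card * Real.sqrt W.card / W.card := by
              apply div_le_div_of_nonneg_right _ hnpos.le
              exact mul_le_mul_of_nonneg_right (h1.trans h2) (Real.sqrt_nonneg _)
          _ = C₁ := by rw [mul_assoc, Real.mul_self_sqrt hnpos.le]; field_simp
      calc f θ₀ ^ 2 ≤ (C₁ / Real.sqrt W.card) ^ 2 :=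
            pow_le_pow_left₀ hfθ₀ hle 2
        _ = C₁ ^ 2 / W.card := by
            rw [div_pow, Real.sq_sqrt hnpos.le]
    have hsub : W.erase θ₀ ⊂ W := Finset.erase_ssubset hθ₀W
    have hrec := ih (W.erase θ₀) hsub
      (fun θ hθ => hf θ (Finset.mem_of_mem_erase hθ))
      (fun Z hZ => hbound Z (hZ.trans (Finset.erase_subset _ _)))
    have hcard' : (W.erase θ₀).card = m := by
      rw [Finset.card_erase_of_mem hθ₀W, hm]; omega
    rw [← Finset.add_sum_erase W _ hθ₀W, hm]
    rw [hcard'] at hrec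
    have hh : (harmonic (m + 1) : ℝ) = (harmonic m : ℝ) + ((m : ℝ) + 1)⁻¹ := by
      push_cast [harmonic_succ]; ring
    rw [hh, mul_add]
    have : (W.card : ℝ) = (m : ℝ) + 1 := by rw [hm]; push_cast; ring
    rw [this] at hsq
    calc f θ₀ ^ 2 + ∑ θ ∈ W.erase θ₀, f θ ^ 2
        ≤ C₁ ^ 2 / ((m : ℝ) + 1) + C₁ ^ 2 * (harmonic m : ℝ) :=
          add_le_add hsq hrec
      _ = C₁ ^ 2 * (harmonic m : ℝ) + C₁ ^ 2 * ((m : ℝ) + 1)⁻¹ := by ring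
/-- If `f ≥ 0` on a finite set `W ⊆ [0,1]` with `|W| > 3` and
`∑_{θ ∈ Z} f(θ) ≤ C₁·|Z|^{1/2}` for every `Z ⊆ W`, then
`∑_{θ ∈ W} f(θ)² ≤ 2·C₁²·log|W|`. -/
theorem sum_sq_le_of_subset_sum_bound (W : Finset ℝ)
    (hW : ∀ θ ∈ W, θ ∈ Set.Icc (0 : ℝ) 1) (hcard : 3 < W.card)
    (f : ℝ → ℝ) (hf : ∀ θ ∈ W, 0 ≤ f θ) (C₁ : ℝ) (hC₁ : 0 ≤ C₁)
    (hbound : ∀ Z ⊆ W, ∑ θ ∈ Z, f θ ≤ C₁ * Real.sqrt Z.card) :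
    ∑ θ ∈ W, (f θ) ^ 2 ≤ 2 * C₁ ^ 2 * Real.log W.card := by
  have h1 := aux_harmonic_bound f C₁ hC₁ W hf hbound
  have h2 : (harmonic W.card : ℝ) ≤ 1 + Real.log W.card :=
    harmonic_le_one_add_log W.card
  have hlog : 1 ≤ Real.log W.card := by
    rw [Real.le_log_iff_exp_le (by positivity)]
    calc Real.exp 1 ≤ 2.7182818286 := Real.exp_one_lt_d9.le
      _ ≤ 4 := by norm_num
      _ ≤ (W.card : ℝ) := by exact_mod_cast hcard
  calc ∑ θ ∈ W, (f θ) ^ 2 ≤ C₁ ^ 2 * (harmonic W.card : ℝ) := h1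
    _ ≤ C₁ ^ 2 * (1 + Real.log W.card) := by
        apply mul_le_mul_of_nonneg_left h2 (by positivity)
    _ ≤ C₁ ^ 2 * (Real.log W.card + Real.log W.card) := by
        apply mul_le_mul_of_nonneg_left _ (by positivity)
        linarith
    _ = 2 * C₁ ^ 2 * Real.log W.card := by ring
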